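/- For δ > 2, the mean of the stationary distribution π equals δ/(2(δ-2)), i.e. ∑_{y=1}^∞ y·π_y = δ/(2(δ-2)), where π_0 = (δ-1)/(2δ) and π_y = π_0·(2y+δ)·Γ(δ+1)·Γ(y)/Γ(y+δ+1). -/

import Mathlib

open Real Filter Finset

set_option maxHeartbeats 2000000 in
theorem stmt_4 (δ : ℝ) (hδ : 2 < δ)
    (pi : ℕ → ℝ)
    (h0 : pi 0 = (δ - 1) / (2 * δ))
    (h : ∀ y : ℕ, 1 ≤ y →
      pi y = (δ - 1) / (2 * δ) * (2 * y + δ) * Real.Gamma (δ + 1) *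
        Real.Gamma y / Real.Gamma (y + δ + 1)) :
    ∑' y : ℕ, (y : ℝ) * pi y = δ / (2 * (δ - 2)) := by
  have hδ0 : (0:ℝ) < δ := by linarith
  have hδ2 : δ - 2 ≠ 0 := ne_of_gt (by linarith)
  have hδ1 : δ - 1 ≠ 0 := ne_of_gt (by linarith)
  have hδne : δ ≠ 0 := ne_of_gt hδ0
  set a : ℝ := 2 / (δ - 2) with ha_def
  set b : ℝ := (δ^2 - 2*δ + 2) / ((δ - 2) * (δ - 1)) with hb_def
  have ha_pos : 0 < a := by
    apply div_pos <;> linarith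
  have hb_pos : 0 < b := by
    apply div_pos
    · nlinarith
    · nlinarith
  set C : ℝ := (δ - 1) / (2 * δ) * Real.Gamma (δ + 1) with hC_def
  set g : ℕ → ℝ := fun n => (a * n^2 + b * n) * Real.Gamma n / Real.Gamma (n + δ)
    with hg_def
  -- telescoping identity
  have key : ∀ n : ℕ, 1 ≤ n → (n : ℝ) * pi n = C * (g n - g (n+1)) := by
    intro n hn
    have hn1 : (1:ℝ) ≤ (n:ℝ) := by exact_mod_cast hn
    have hnpos : (0:ℝ) < (n:ℝ) := by linarith
    have hG : Real.Gamma ((n:ℝ) + 1) = (n:ℝ) * Real.Gamma n :=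
      Real.Gamma_add_one (by positivity)
    have hD : Real.Gamma ((n:ℝ) + δ + 1) = ((n:ℝ) + δ) * Real.Gamma ((n:ℝ) + δ) :=
      Real.Gamma_add_one (by positivity)
    have hDpos : 0 < Real.Gamma ((n:ℝ) + δ) := Real.Gamma_pos_of_pos (by positivity)
    have hndpos : (0:ℝ) < (n:ℝ) + δ := by positivity
    have hGsucc : Real.Gamma ((n:ℝ) + 1 + δ) = ((n:ℝ) + δ) * Real.Gamma ((n:ℝ) + δ) := by
      rw [show ((n:ℝ) + 1 + δ) = ((n:ℝ) + δ) + 1 by ring,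
        Real.Gamma_add_one (ne_of_gt hndpos)]
    rw [h n hn, hg_def]
    simp only
    push_cast
    rw [hG, hD, hGsucc]
    rw [hC_def, ha_def, hb_def]
    field_simp
    ring
  -- positivity of the terms
  have hterm_nonneg : ∀ n : ℕ, 0 ≤ (n : ℝ) * pi n := by
    intro n
    rcases Nat.eq_zero_or_pos n with rfl | hn
    · simp
    · rw [h n hn]
      have hn1 : (0:ℝ) < (n:ℝ) := by exact_mod_cast hn
      have := Real.Gamma_pos_of_pos (show (0:ℝ) < (n:ℝ) by positivity)
      have := Real.Gamma_pos_of_pos (show (0:ℝ) < δ + 1 by positivity)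
      have := Real.Gamma_pos_of_pos (show (0:ℝ) < (n:ℝ) + δ + 1 by positivity)
      have h2 : (0:ℝ) < 2 * (n:ℝ) + δ := by positivity
      have h3 : (0:ℝ) < (δ - 1) / (2 * δ) := by
        apply div_pos <;> linarith
      positivity
  -- limit of g
  set ε : ℝ := min (δ - 2) (1/2) with hε_def
  have hε_pos : 0 < ε := lt_min (by linarith) (by norm_num)
  have hε_half : ε ≤ 1/2 := min_le_right _ _
  have hε_lt1 : ε < 1 := lt_of_le_of_lt hε_half (by norm_num)
  have hεδ : ε ≤ δ - 2 := min_le_left _ _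
  have hg_nonneg : ∀ n : ℕ, 0 ≤ g n := by
    intro n
    rcases Nat.eq_zero_or_pos n with rfl | hn
    · simp [hg_def]
    · have hn1 : (0:ℝ) < (n:ℝ) := by exact_mod_cast hn
      have h1 := Real.Gamma_pos_of_pos hn1
      have h2 := Real.Gamma_pos_of_pos (show (0:ℝ) < (n:ℝ) + δ by positivity)
      simp only [hg_def]
      positivity
  have hg_bound : ∀ n : ℕ, 1 ≤ n → g n ≤ (a + b) * ((n:ℝ) + 1) ^ (-ε) := by
    intro n hn
    have hn1 : (1:ℝ) ≤ (n:ℝ) := by exact_mod_cast hn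
    have hnpos : (0:ℝ) < (n:ℝ) := by linarith
    have hGn := Real.Gamma_pos_of_pos hnpos
    -- Γ(n+δ) ≥ Γ(n+2+ε)
    have mono := Real.Gamma_strictMonoOn_Ici.monotoneOn
    have hstep1 : Real.Gamma ((n:ℝ) + 2 + ε) ≤ Real.Gamma ((n:ℝ) + δ) := by
      apply mono
      · simp only [Set.mem_Ici]; linarith
      · simp only [Set.mem_Ici]; linarith
      · linarith
    -- Γ(n+2+ε) ≥ Γ(n+2) * (n+1+ε)^ε   via log-convexity
    have hstep2 : Real.Gamma ((n:ℝ) + 2) * ((n:ℝ) + 1 + ε) ^ ε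
        ≤ Real.Gamma ((n:ℝ) + 2 + ε) := by
      have hs : (0:ℝ) < (n:ℝ) + 1 + ε := by linarith
      have ht : (0:ℝ) < (n:ℝ) + 2 + ε := by linarith
      have hconv := Real.Gamma_mul_add_mul_le_rpow_Gamma_mul_rpow_Gamma hs ht hε_pos
        (by linarith : (0:ℝ) < 1 - ε) (by ring)
      have heq : ε * ((n:ℝ) + 1 + ε) + (1 - ε) * ((n:ℝ) + 2 + ε) = (n:ℝ) + 2 := by ring
      rw [heq] at hconv
      have hGs : Real.Gamma ((n:ℝ) + 2 + ε) = ((n:ℝ) + 1 + ε) * Real.Gamma ((n:ℝ) + 1 + ε) := by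
        have : (n:ℝ) + 2 + ε = ((n:ℝ) + 1 + ε) + 1 := by ring
        rw [this, Real.Gamma_add_one (by positivity)]
      have hGt_pos := Real.Gamma_pos_of_pos ht
      have hGs_pos := Real.Gamma_pos_of_pos hs
      -- from hconv : Γ(n+2) ≤ Γ(n+1+ε)^ε * Γ(n+2+ε)^(1-ε)
      -- and Γ(n+1+ε) = Γ(n+2+ε)/(n+1+ε)
      have h2 : Real.Gamma ((n:ℝ) + 1 + ε) = Real.Gamma ((n:ℝ) + 2 + ε) / ((n:ℝ) + 1 + ε) := by
        rw [hGs]; field_simp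
      rw [h2, Real.div_rpow hGt_pos.le hs.le] at hconv
      have hrw : Real.Gamma ((n:ℝ) + 2 + ε) ^ ε / ((n:ℝ) + 1 + ε) ^ ε
          * Real.Gamma ((n:ℝ) + 2 + ε) ^ (1 - ε)
          = Real.Gamma ((n:ℝ) + 2 + ε) / ((n:ℝ) + 1 + ε) ^ ε := by
        rw [div_mul_eq_mul_div, ← Real.rpow_add hGt_pos]
        norm_num
      rw [hrw] at hconv
      exact (le_div_iff₀ (by positivity)).mp hconv
    have hstep3 : ((n:ℝ) + 1) ^ ε ≤ ((n:ℝ) + 1 + ε) ^ ε :=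
      Real.rpow_le_rpow (by linarith) (by linarith) hε_pos.le
    have hG2 : Real.Gamma ((n:ℝ) + 2) = ((n:ℝ) + 1) * ((n:ℝ) * Real.Gamma n) := by
      have e1 : (n:ℝ) + 2 = ((n:ℝ) + 1) + 1 := by ring
      rw [e1, Real.Gamma_add_one (by positivity), Real.Gamma_add_one (by positivity)]
    have hlow : ((n:ℝ) + 1) * ((n:ℝ) * Real.Gamma n) * ((n:ℝ) + 1) ^ ε
        ≤ Real.Gamma ((n:ℝ) + δ) := by
      calc ((n:ℝ) + 1) * ((n:ℝ) * Real.Gamma n) * ((n:ℝ) + 1) ^ ε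
          ≤ Real.Gamma ((n:ℝ) + 2) * ((n:ℝ) + 1 + ε) ^ ε := by
            rw [hG2]
            apply mul_le_mul_of_nonneg_left hstep3 (by positivity)
        _ ≤ Real.Gamma ((n:ℝ) + 2 + ε) := hstep2
        _ ≤ Real.Gamma ((n:ℝ) + δ) := hstep1
    -- now conclude
    simp only [hg_def]
    rw [div_le_iff₀ (Real.Gamma_pos_of_pos (by positivity : (0:ℝ) < (n:ℝ) + δ))]
    calc (a * (n:ℝ)^2 + b * (n:ℝ)) * Real.Gamma n
        ≤ (a + b) * ((n:ℝ) + 1) ^ (-ε) * (((n:ℝ) + 1) * ((n:ℝ) * Real.Gamma n)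
            * ((n:ℝ) + 1) ^ ε) := by
          rw [Real.rpow_neg (by positivity)]
          have hne : (((n:ℝ) + 1) ^ ε) ≠ 0 := by positivity
          have e : (a + b) * (((n:ℝ) + 1) ^ ε)⁻¹ * (((n:ℝ) + 1) * ((n:ℝ) * Real.Gamma n)
              * ((n:ℝ) + 1) ^ ε) = (a + b) * (((n:ℝ) + 1) * (n:ℝ)) * Real.Gamma n := by
            field_simp
          rw [e]
          apply mul_le_mul_of_nonneg_right _ hGn.le
          nlinarith [ha_pos, hb_pos]
      _ ≤ (a + b) * ((n:ℝ) + 1) ^ (-ε) * Real.Gamma ((n:ℝ) + δ) := by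
          apply mul_le_mul_of_nonneg_left hlow
          positivity
  have hg_tendsto : Tendsto g atTop (nhds 0) := by
    have hub : Tendsto (fun n : ℕ => (a + b) * ((n:ℝ) + 1) ^ (-ε)) atTop (nhds 0) := by
      have h1 : Tendsto (fun n : ℕ => ((n:ℝ) + 1)) atTop atTop :=
        tendsto_atTop_add_const_right _ 1 tendsto_natCast_atTop_atTop
      have h2 := (tendsto_rpow_neg_atTop hε_pos).comp h1
      have := h2.const_mul (a + b)
      simpa using this
    apply squeeze_zero' (Eventually.of_forall hg_nonneg) _ hub
    filter_upwards [eventually_ge_atTop 1] with n hn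
    exact hg_bound n hn
  -- the sum
  have hS : HasSum (fun n : ℕ => ((n+1 : ℕ) : ℝ) * pi (n+1)) (C * g 1) := by
    rw [hasSum_iff_tendsto_nat_of_nonneg (fun n => hterm_nonneg (n+1))]
    have hps : ∀ N : ℕ, ∑ i ∈ range N, ((i+1 : ℕ) : ℝ) * pi (i+1)
        = C * g 1 - C * g (N+1) := by
      intro N
      have : ∀ i ∈ range N, ((i+1 : ℕ) : ℝ) * pi (i+1)
          = (fun k => C * g (k+1)) i - (fun k => C * g (k+1)) (i+1) := by
        intro i _
        simp only
        rw [key (i+1) (Nat.le_add_left 1 i)]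
        ring
      rw [Finset.sum_congr rfl this, Finset.sum_range_sub' (fun k => C * g (k+1))]
    have h2 : Tendsto (fun N : ℕ => C * g 1 - C * g (N+1)) atTop (nhds (C * g 1 - C * 0)) := by
      apply Tendsto.sub tendsto_const_nhds
      exact (hg_tendsto.comp (tendsto_add_atTop_nat 1)).const_mul C
    rw [mul_zero, sub_zero] at h2
    exact Tendsto.congr (fun N => (hps N).symm) h2
  have hS' : HasSum (fun n : ℕ => (n : ℝ) * pi n) (C * g 1) := by
    refine (hasSum_nat_add_iff' (f := fun n : ℕ => (n : ℝ) * pi n) (g := C * g 1) 1).mp ?_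
    simpa using hS
  rw [hS'.tsum_eq]
  -- compute C * g 1
  have hΓ := Real.Gamma_pos_of_pos (show (0:ℝ) < δ + 1 by linarith)
  simp only [hg_def, hC_def, ha_def, hb_def]
  push_cast
  rw [show (1:ℝ) + δ = δ + 1 by ring, Real.Gamma_one]
  field_simp
  ring
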